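/- Let m be a prime number. Let H be a finite group containing a normal subgroup G, fix h ∈ H, and let μ ∈ Aut(G) be the automorphism of G induced by conjugation by h; set n := ord(μ). Let T be a maximal abelian subgroup of G with μ(T) = T, and let c be the number of elements of T whose order divides n. Assume: (1) m divides |T_μ|; (2) |T_{μ,n}| ≥ (3/4)·|T_μ|. Then |{x^m : x ∈ Gh}| ≤ (1 − 1/(4·c·[N_G(T):T]))·|G|, where Gh denotes the coset {gh : g ∈ G}. -/

import Mathlib

set_option maxHeartbeats 1600000

/-- **Power proportion in a coset.** Let `m` be prime, `H` a finite group with a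
normal subgroup `G`, `h ∈ H`, and let `μ ∈ Aut(G)` be conjugation by `h`, of order
`n`. Let `T ≤ G` be a maximal abelian subgroup with `μ(T) = T`, and let `c` be the
number of elements of `T` of order dividing `n`. If `m` divides `|T_μ|` and
`|T_{μ,n}| ≥ (3/4)|T_μ|`, then
`|{x^m : x ∈ Gh}| ≤ (1 − 1/(4c[N_G(T):T]))·|G|`. -/
theorem power_proportion {H : Type*} [Group H] [Finite H]
    (m : ℕ) (hm : m.Prime)
    (G : Subgroup H) (hG : G.Normal) (h : H)
    (μ : MulAut ↥G) (hμ : ∀ g : ↥G, ((μ g : ↥G) : H) = h * (g : H) * h⁻¹)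
    (n : ℕ) (hn : n = orderOf μ)
    (T : Subgroup ↥G)
    (hcomm : ∀ a ∈ T, ∀ b ∈ T, a * b = b * a)
    (hmax : ∀ T' : Subgroup ↥G, (∀ a ∈ T', ∀ b ∈ T', a * b = b * a) → T ≤ T' → T' = T)
    (hμT : ∀ g : ↥G, g ∈ T ↔ μ g ∈ T)
    (c : ℕ) (hc : c = Nat.card {t : ↥G | t ∈ T ∧ t ^ n = 1})
    (h1 : m ∣ Nat.card {t : ↥G | t ∈ T ∧ μ t = t})
    (h2 : (3 / 4 : ℝ) * (Nat.card {t : ↥G | t ∈ T ∧ μ t = t} : ℝ) ≤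
      (Nat.card {t : ↥G | t ∈ T ∧ μ t = t ∧ Subgroup.centralizer {t ^ n} = T} : ℝ)) :
    (Nat.card {y : H | ∃ g : H, g ∈ G ∧ y = (g * h) ^ m} : ℝ) ≤
      (1 - 1 / (4 * (c : ℝ) * (T.relIndex (Subgroup.normalizer (T : Set ↥G)) : ℝ))) * (Nat.card G : ℝ) := by
  classical
  have hFH : Fintype H := Fintype.ofFinite H
  -- conjugation basics
  have hconj : ∀ g : ↥G, h * (g : H) = ((μ g : ↥G) : H) * h := by
    intro g; rw [hμ]; group
  have hpowconj : ∀ (k : ℕ) (g : ↥G), (((μ ^ k) g : ↥G) : H) = h ^ k * (g : H) * (h ^ k)⁻¹ := by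
    intro k
    induction k with
    | zero => intro g; simp
    | succ k ih =>
      intro g
      have : (μ ^ (k+1)) g = (μ ^ k) (μ g) := by
        rw [pow_succ]; rfl
      rw [this, ih (μ g), hμ g]
      group
  have hμn : μ ^ n = 1 := by rw [hn]; exact pow_orderOf_eq_one μ
  have hhn : ∀ g : ↥G, h ^ n * (g : H) = (g : H) * h ^ n := by
    intro g
    have := hpowconj n g
    rw [hμn] at this
    simp only [MulAut.one_apply] at this
    calc h ^ n * (g:H) = (h ^ n * (g:H) * (h^n)⁻¹) * h ^ n := by group
    _ = (g:H) * h ^ n := by rw [← this]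
  have hcommh : ∀ t : ↥G, μ t = t → Commute (t : H) h := by
    intro t ht
    have : (t : H) * h = h * (t : H) := by rw [hconj t, ht]
    exact this
  -- key norm identity
  have keyn : ∀ t u s : ↥G, μ t = t → μ s = s → s = u⁻¹ * t * μ u →
      s ^ n = u⁻¹ * t ^ n * u := by
    intro t u s ht hs hdef
    have hsH : (s : H) * h = (u : H)⁻¹ * ((t : H) * h) * (u : H) := by
      have e1 : (s : H) = (u : H)⁻¹ * (t : H) * ((μ u : ↥G) : H) := by
        rw [hdef]; push_cast; ring
      rw [e1, hμ u]; group
    have e2 : ((s : H) * h) ^ n = ((s ^ n : ↥G) : H) * h ^ n := by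
      rw [(hcommh s hs).mul_pow]; push_cast; ring
    have e3 : ((s : H) * h) ^ n = (u : H)⁻¹ * ((t ^ n : ↥G) : H) * (u : H) * h ^ n := by
      rw [hsH]
      have e4 : ((u : H)⁻¹ * ((t : H) * h) * (u : H)) ^ n
          = (u : H)⁻¹ * ((t : H) * h) ^ n * (u : H) := by
        simpa using conj_pow (i := n) (a := (u : H)⁻¹) (b := (t : H) * h)
      rw [e4, (hcommh t ht).mul_pow]
      have e5 : h ^ n * (u : H) = (u : H) * h ^ n := hhn u
      push_cast
      calc (u:H)⁻¹ * ((t:H)^n * h^n) * (u:H) = (u:H)⁻¹ * (t:H)^n * (h^n * (u:H)) := by group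
      _ = (u:H)⁻¹ * (t:H)^n * ((u:H) * h^n) := by rw [e5]
      _ = (u:H)⁻¹ * (t:H)^n * (u:H) * h^n := by group
    have e6 : ((s ^ n : ↥G) : H) = (u : H)⁻¹ * ((t ^ n : ↥G) : H) * (u : H) :=
      mul_right_cancel (e2 ▸ e3)
    apply Subtype.coe_injective
    push_cast
    push_cast at e6
    exact e6
  -- sets
  set Tμ : Set ↥G := {t : ↥G | t ∈ T ∧ μ t = t} with hTμdef
  set Tμn : Set ↥G := {t : ↥G | t ∈ T ∧ μ t = t ∧ Subgroup.centralizer {t ^ n} = T} with hTμndef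
  set Tn1 : Set ↥G := {t : ↥G | t ∈ T ∧ t ^ n = 1} with hTn1def
  set Z : Set ↥G := {z : ↥G | z ∈ T ∧ μ z = z ∧ z ^ m = 1} with hZdef
  -- Cauchy: an element of order m in T_μ
  obtain ⟨z₀, hz₀Z, hz₀ne⟩ : ∃ z₀ : ↥G, z₀ ∈ Z ∧ z₀ ≠ 1 := by
    let S : Subgroup ↥G :=
      { carrier := Tμ
        one_mem' := ⟨T.one_mem, map_one μ⟩
        mul_mem' := by
          rintro a b ⟨haT, haμ⟩ ⟨hbT, hbμ⟩
          exact ⟨T.mul_mem haT hbT, by rw [map_mul, haμ, hbμ]⟩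
        inv_mem' := by
          rintro a ⟨haT, haμ⟩
          exact ⟨T.inv_mem haT, by rw [map_inv, haμ]⟩ }
    haveI : Fact m.Prime := ⟨hm⟩
    have hdvd : m ∣ Nat.card S := h1
    obtain ⟨x, hx⟩ := exists_prime_orderOf_dvd_card' (G := S) m hdvd
    have hmem : (x : ↥G) ∈ Tμ := x.2
    have hxZ : (x : ↥G) ∈ Z := by
      refine ⟨hmem.1, hmem.2, ?_⟩
      have e1 : x ^ m = 1 := by rw [← hx]; exact pow_orderOf_eq_one x
      have e2 : ((x ^ m : S) : ↥G) = ((1 : S) : ↥G) := by rw [e1]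
      simpa using e2
    refine ⟨x, hxZ, fun h1' => ?_⟩
    have hx1 : (x : S) = 1 := Subtype.coe_injective (by simpa using h1')
    rw [hx1, orderOf_one] at hx
    exact hm.ne_one hx.symm
  -- maps and finsets
  set Φ : ↥G × ↥G → H := fun p => (p.1 : H) * (p.2 : H) * h * (p.1 : H)⁻¹ with hΦdef
  set Ψ : ↥G × ↥G × ↥G → H :=
    fun p => (p.1 : H) * (p.2.1 : H) * (p.2.2 : H) * h * (p.1 : H)⁻¹ with hΨdef
  set domA : Finset (↥G × ↥G) := Finset.univ ×ˢ Tμn.toFinset with hdomA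
  set domB : Finset (↥G × ↥G × ↥G) := Finset.univ ×ˢ (Tμn.toFinset ×ˢ Z.toFinset) with hdomB
  set A : Finset H := domA.image Φ with hA
  set B : Finset H := domB.image Ψ with hB
  set Cfin : Finset H := Finset.univ.image (fun g : ↥G => (g : H) * h) with hC
  set fB : Finset H := B.image (fun x => x ^ m) with hfB
  set Pfin : Finset H := Cfin.image (fun x => x ^ m) with hP
  -- A ⊆ B
  have cAB : A ⊆ B := by
    intro x hx
    rw [hA, Finset.mem_image] at hx
    obtain ⟨p, hp, rfl⟩ := hx
    rw [hdomA, Finset.mem_product] at hp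
    rw [hB, Finset.mem_image]
    refine ⟨(p.1, p.2, 1), ?_, ?_⟩
    · rw [hdomB]
      simp only [Finset.mem_product, Finset.mem_univ, true_and]
      exact ⟨hp.2, by simp [Set.mem_toFinset, hZdef, T.one_mem, map_one μ]⟩
    · rw [hΦdef, hΨdef]; push_cast; group
  -- B ⊆ Cfin
  have cBC : B ⊆ Cfin := by
    intro x hx
    rw [hB, Finset.mem_image] at hx
    obtain ⟨⟨g, t, z⟩, hp, rfl⟩ := hx
    rw [hC, Finset.mem_image]
    refine ⟨g * t * z * μ g⁻¹, Finset.mem_univ _, ?_⟩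
    rw [hΨdef]
    push_cast [hμ]
    group
  have cCcard : Cfin.card = Fintype.card ↥G := by
    have hinj : Function.Injective (fun g : ↥G => (g : H) * h) :=
      fun a b hab => Subtype.coe_injective (mul_right_cancel hab)
    rw [hC, Finset.card_image_of_injective _ hinj, Finset.card_univ]
  -- each fiber of the m-th power map over fB has ≥ 2 elements in B
  have Ψpow : ∀ g t z : ↥G, t ∈ Tμn → z ∈ Z →
      (Ψ (g, t, z)) ^ m = (g : H) * ((t ^ m : ↥G) : H) * h ^ m * (g : H)⁻¹ := by
    intro g t z ht hz
    have hμtz : μ (t * z) = t * z := by rw [map_mul, ht.2.1, hz.2.1]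
    have hctz : Commute ((t * z : ↥G) : H) h := hcommh _ hμtz
    have e1 : Ψ (g, t, z) = (g : H) * (((t * z : ↥G) : H) * h) * (g : H)⁻¹ := by
      rw [hΨdef]; push_cast; group
    have e2 : (t * z) ^ m = t ^ m := by
      have hcz : Commute t z := hcomm t ht.1 z hz.1
      rw [hcz.mul_pow, hz.2.2, mul_one]
    have e3 : ((t * z : ↥G) : H) ^ m = ((t ^ m : ↥G) : H) := by
      rw [← SubgroupClass.coe_pow, e2]
    rw [e1, conj_pow, hctz.mul_pow, e3]
    group
  have fiber2 : ∀ y ∈ B.image (fun x => x ^ m), 2 ≤ (B.filter fun x => x ^ m = y).card := by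
    intro y hy
    rw [Finset.mem_image] at hy
    obtain ⟨x, hxB, hxy⟩ := hy
    have hxB' := hxB
    rw [hB, Finset.mem_image] at hxB'
    obtain ⟨⟨g, t, z⟩, hp, rfl⟩ := hxB'
    rw [hdomB] at hp
    simp only [Finset.mem_product, Finset.mem_univ, true_and] at hp
    obtain ⟨htF, hzF⟩ := hp
    rw [Set.mem_toFinset] at htF hzF
    have hzz₀ : z * z₀ ∈ Z := by
      refine ⟨T.mul_mem hzF.1 hz₀Z.1, by rw [map_mul, hzF.2.1, hz₀Z.2.1], ?_⟩
      have hcz : Commute z z₀ := hcomm z hzF.1 z₀ hz₀Z.1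
      rw [hcz.mul_pow, hzF.2.2, hz₀Z.2.2, mul_one]
    have hx2B : Ψ (g, t, z * z₀) ∈ B := by
      rw [hB, Finset.mem_image]
      refine ⟨(g, t, z * z₀), ?_, rfl⟩
      rw [hdomB]
      simp only [Finset.mem_product, Finset.mem_univ, true_and]
      exact ⟨by rw [Set.mem_toFinset]; exact htF, by rw [Set.mem_toFinset]; exact hzz₀⟩
    have hne : Ψ (g, t, z) ≠ Ψ (g, t, z * z₀) := by
      intro heq
      rw [hΨdef] at heq
      simp only at heq
      push_cast at heq
      have e1 : (z : H) = (z : H) * z₀ :=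
        mul_left_cancel (mul_right_cancel (mul_right_cancel heq))
      have e2 : (z₀ : H) = 1 := left_eq_mul.mp e1
      exact hz₀ne (Subtype.coe_injective (by simpa using e2))
    have hx2y : (Ψ (g, t, z * z₀)) ^ m = y := by
      rw [Ψpow g t (z * z₀) htF hzz₀, ← Ψpow g t z htF hzF, hxy]
    exact Finset.one_lt_card.mpr ⟨Ψ (g, t, z), Finset.mem_filter.mpr ⟨hxB, hxy⟩,
      Ψ (g, t, z * z₀), Finset.mem_filter.mpr ⟨hx2B, hx2y⟩, hne⟩
  have cardB2 : 2 * fB.card ≤ B.card := Finset.mul_card_image_le_card B 2 fiber2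
  have cardP : Pfin.card + B.card ≤ fB.card + Cfin.card := by
    have hsub : Pfin ⊆ fB ∪ (Cfin \ B).image (fun x => x ^ m) := by
      intro y hy
      rw [hP, Finset.mem_image] at hy
      obtain ⟨x, hxC, rfl⟩ := hy
      by_cases hxB : x ∈ B
      · exact Finset.mem_union_left _ (by rw [hfB]; exact Finset.mem_image_of_mem _ hxB)
      · exact Finset.mem_union_right _
          (Finset.mem_image_of_mem _ (Finset.mem_sdiff.mpr ⟨hxC, hxB⟩))
    have h3 := Finset.card_le_card hsub
    have h4 := Finset.card_union_le fB ((Cfin \ B).image (fun x => x ^ m))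
    have h5 := Finset.card_image_le (s := Cfin \ B) (f := fun x => x ^ m)
    have h6 : (Cfin \ B).card = Cfin.card - B.card := Finset.card_sdiff_of_subset cBC
    have h7 := Finset.card_le_card cBC
    omega
  have eTμ : (Nat.card ↥Tμ) = Tμ.toFinset.card := by
    rw [Nat.card_coe_set_eq, Set.ncard_eq_toFinset_card']
  have eTμn : (Nat.card ↥Tμn) = Tμn.toFinset.card := by
    rw [Nat.card_coe_set_eq, Set.ncard_eq_toFinset_card']
  have eTn1 : (Nat.card ↥Tn1) = Tn1.toFinset.card := by
    rw [Nat.card_coe_set_eq, Set.ncard_eq_toFinset_card']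
  -- the key fiber bound for Φ
  have fiberbound : ∀ x ∈ domA.image Φ, (domA.filter fun p => Φ p = x).card ≤
      Tμ.toFinset.card * (c * T.relIndex (Subgroup.normalizer (T : Set ↥G))) := by
    intro x hx
    set F := domA.filter (fun p => Φ p = x) with hF
    rcases Finset.eq_empty_or_nonempty F with hFe | ⟨⟨g, t⟩, hgt⟩
    · rw [hFe, Finset.card_empty]; exact Nat.zero_le _
    have hgt' := Finset.mem_filter.mp hgt
    have htmem : t ∈ Tμn := by
      have := hgt'.1
      rw [hdomA] at this
      simp only [Finset.mem_product, Finset.mem_univ, true_and] at this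
      rwa [Set.mem_toFinset] at this
    have hΦx : Φ (g, t) = x := hgt'.2
    set ψ : ↥G → ↥G := fun u => u⁻¹ * t * μ u with hψ
    have ψmul : ∀ u v : ↥G, ψ (u * v) = v⁻¹ * ψ u * μ v := by
      intro u v
      rw [hψ]
      simp only [map_mul, mul_inv_rev]
      group
    have fixv : ∀ s v : ↥G, s ∈ T → v ∈ T → s = v⁻¹ * s * μ v → μ v = v := by
      intro s v hs hv he
      have h1' : v * s = s * μ v := by
        calc v * s = v * (v⁻¹ * s * μ v) := by rw [← he]
        _ = s * μ v := by group
      have h2' : v * s = s * v := hcomm v hv s hs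
      exact mul_left_cancel (h1'.symm.trans h2')
    -- every element of the fiber gives an element of the normalizer
    have hnorm : ∀ u t' : ↥G, t' ∈ Tμn → t' = u⁻¹ * t * μ u → u ∈ (Subgroup.normalizer (T : Set ↥G)) := by
      intro u t' ht' hdef
      have htn' : t' ^ n = u⁻¹ * t ^ n * u := keyn t u t' htmem.2.1 ht'.2.1 hdef
      rw [Subgroup.mem_normalizer_iff]
      intro x'
      have c1 : x' ∈ T ↔ t' ^ n * x' = x' * t' ^ n := by
        rw [← ht'.2.2, Subgroup.mem_centralizer_iff]
        constructor
        · intro hx'; exact hx' _ (Set.mem_singleton _)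
        · intro hx' y hy; rw [Set.mem_singleton_iff] at hy; rw [hy]; exact hx'
      have c2 : u * x' * u⁻¹ ∈ T ↔ t ^ n * (u * x' * u⁻¹) = (u * x' * u⁻¹) * t ^ n := by
        rw [← htmem.2.2, Subgroup.mem_centralizer_iff]
        constructor
        · intro hx'; exact hx' _ (Set.mem_singleton _)
        · intro hx' y hy; rw [Set.mem_singleton_iff] at hy; rw [hy]; exact hx'
      rw [c1, c2, htn']
      constructor
      · intro He
        calc t ^ n * (u * x' * u⁻¹) = u * (u⁻¹ * t ^ n * u * x') * u⁻¹ := by group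
        _ = u * (x' * (u⁻¹ * t ^ n * u)) * u⁻¹ := by rw [He]
        _ = (u * x' * u⁻¹) * t ^ n := by group
      · intro He
        calc u⁻¹ * t ^ n * u * x' = u⁻¹ * (t ^ n * (u * x' * u⁻¹)) * u := by group
        _ = u⁻¹ * ((u * x' * u⁻¹) * t ^ n) * u := by rw [He]
        _ = x' * (u⁻¹ * t ^ n * u) := by group
    have main : ∀ p ∈ F, p.2 = ψ (g⁻¹ * p.1) ∧ (g⁻¹ * p.1) ∈ (Subgroup.normalizer (T : Set ↥G)) := by
      rintro ⟨g', t'⟩ hp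
      have hp' := Finset.mem_filter.mp hp
      have ht'mem : t' ∈ Tμn := by
        have := hp'.1
        rw [hdomA] at this
        simp only [Finset.mem_product, Finset.mem_univ, true_and] at this
        rwa [Set.mem_toFinset] at this
      have hEq : (g' : H) * t' * h * (g' : H)⁻¹ = (g : H) * t * h * (g : H)⁻¹ := by
        have := hp'.2.trans hΦx.symm
        rw [hΦdef] at this
        exact this
      have hdef : t' = (g⁻¹ * g')⁻¹ * t * μ (g⁻¹ * g') := by
        apply Subtype.coe_injective
        push_cast [hμ (g⁻¹ * g')]
        calc (t' : H) = (g' : H)⁻¹ * ((g' : H) * t' * h * (g' : H)⁻¹) * ((g' : H) * h⁻¹) := by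
              group
        _ = (g' : H)⁻¹ * ((g : H) * t * h * (g : H)⁻¹) * ((g' : H) * h⁻¹) := by rw [hEq]
        _ = ((g : H)⁻¹ * (g' : H))⁻¹ * (t : H) * (h * ((g : H)⁻¹ * (g' : H)) * h⁻¹) := by
              group
      refine ⟨hdef, hnorm (g⁻¹ * g') t' ht'mem hdef⟩
    set W : Finset ↥G := Finset.univ.filter (fun u => u ∈ (Subgroup.normalizer (T : Set ↥G)) ∧ ψ u ∈ Tμn) with hW
    have inj1 : F.card ≤ W.card := by
      apply Finset.card_le_card_of_injOn (fun p => g⁻¹ * p.1)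
      · intro p hp
        obtain ⟨hψp, hnp⟩ := main p hp
        rw [Finset.mem_coe, hW, Finset.mem_filter]
        refine ⟨Finset.mem_univ _, hnp, ?_⟩
        rw [← hψp]
        have := Finset.mem_filter.mp hp |>.1
        rw [hdomA] at this
        simp only [Finset.mem_product, Finset.mem_univ, true_and] at this
        rwa [Set.mem_toFinset] at this
      · intro p hp q hq he
        have he1 : p.1 = q.1 := by
          have := mul_left_cancel (a := g⁻¹) he
          exact this
        have he2 : p.2 = q.2 := by
          rw [(main p hp).1, (main q hq).1, he1]
        exact Prod.ext he1 he2
    -- count W via the map to (coset, ψ-value)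
    set θ : ↥G → (↥G ⧸ T) × ↥G := fun u => ((u : ↥G ⧸ T), ψ u) with hθ
    have fib1 : ∀ p ∈ W.image θ, (W.filter fun u => θ u = p).card ≤ Tμ.toFinset.card := by
      intro p hp
      rw [Finset.mem_image] at hp
      obtain ⟨u₁, hu₁W, hu₁p⟩ := hp
      have hu₁W' := Finset.mem_filter.mp hu₁W
      apply Finset.card_le_card_of_injOn (fun u => u₁⁻¹ * u)
      · intro u hu
        obtain ⟨huW, huθ⟩ := Finset.mem_filter.mp hu
        have huW' := Finset.mem_filter.mp huW
        have hθeq : θ u₁ = θ u := hu₁p.trans huθ.symm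
        have hq : ((u₁ : ↥G) : ↥G ⧸ T) = ((u : ↥G) : ↥G ⧸ T) := congrArg Prod.fst hθeq
        have hvT : u₁⁻¹ * u ∈ T := QuotientGroup.eq.mp hq
        have hψeq : ψ u₁ = ψ u := congrArg Prod.snd hθeq
        have hu' : u = u₁ * (u₁⁻¹ * u) := by group
        have hee : ψ u₁ = (u₁⁻¹ * u)⁻¹ * ψ u₁ * μ (u₁⁻¹ * u) := by
          conv_lhs => rw [hψeq, hu', ψmul]
        have hμv : μ (u₁⁻¹ * u) = u₁⁻¹ * u :=
          fixv (ψ u₁) (u₁⁻¹ * u) hu₁W'.2.2.1 hvT hee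
        rw [Finset.mem_coe, Set.mem_toFinset]
        exact ⟨hvT, hμv⟩
      · intro a _ b _ he
        exact mul_left_cancel he
    have cnt1 : W.card ≤ Tμ.toFinset.card * (W.image θ).card :=
      Finset.card_le_mul_card_image W _ fib1
    -- count the image of θ fiberwise over cosets
    have fib2 : ∀ q ∈ (W.image θ).image Prod.fst,
        ((W.image θ).filter fun p => p.1 = q).card ≤ c := by
      intro q hq
      rcases Finset.eq_empty_or_nonempty ((W.image θ).filter fun p => p.1 = q) with he | ⟨p₀, hp₀⟩
      · rw [he, Finset.card_empty]; exact Nat.zero_le _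
      obtain ⟨hp₀W, hp₀q⟩ := Finset.mem_filter.mp hp₀
      rw [Finset.mem_image] at hp₀W
      obtain ⟨u₀, hu₀W, hu₀p⟩ := hp₀W
      have hu₀W' := Finset.mem_filter.mp hu₀W
      rw [hc, eTn1]
      apply Finset.card_le_card_of_injOn (fun p => (ψ u₀)⁻¹ * p.2)
      · intro p hp
        obtain ⟨hpW, hpq⟩ := Finset.mem_filter.mp hp
        rw [Finset.mem_image] at hpW
        obtain ⟨u, huW, hup⟩ := hpW
        have huW' := Finset.mem_filter.mp huW
        -- same coset
        have hq0 : ((u₀ : ↥G) : ↥G ⧸ T) = ((u : ↥G) : ↥G ⧸ T) := by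
          have e1 : ((u₀ : ↥G) : ↥G ⧸ T) = q := by rw [← hp₀q, ← hu₀p]
          have e2 : ((u : ↥G) : ↥G ⧸ T) = q := by rw [← hpq, ← hup]
          rw [e1, e2]
        have hvT : u₀⁻¹ * u ∈ T := QuotientGroup.eq.mp hq0
        have hu' : u = u₀ * (u₀⁻¹ * u) := by group
        -- n-th powers agree
        have hsn : (ψ u) ^ n = u⁻¹ * t ^ n * u :=
          keyn t u (ψ u) htmem.2.1 (huW'.2.2.2.1) rfl
        have hs₀n : (ψ u₀) ^ n = u₀⁻¹ * t ^ n * u₀ :=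
          keyn t u₀ (ψ u₀) htmem.2.1 (hu₀W'.2.2.2.1) rfl
        have hcomm₀ : (ψ u₀) ^ n * (u₀⁻¹ * u) = (u₀⁻¹ * u) * (ψ u₀) ^ n :=
          hcomm _ (T.pow_mem hu₀W'.2.2.1 n) _ hvT
        have hpow : (ψ u) ^ n = (ψ u₀) ^ n := by
          rw [hsn, hs₀n]
          have hcmx : (u₀⁻¹ * t ^ n * u₀) * (u₀⁻¹ * u) = (u₀⁻¹ * u) * (u₀⁻¹ * t ^ n * u₀) := by
            rw [← hs₀n]; exact hcomm₀
          calc u⁻¹ * t ^ n * u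
              = (u₀⁻¹ * u)⁻¹ * ((u₀⁻¹ * t ^ n * u₀) * (u₀⁻¹ * u)) := by
                conv_lhs => rw [hu']
                group
          _ = (u₀⁻¹ * u)⁻¹ * ((u₀⁻¹ * u) * (u₀⁻¹ * t ^ n * u₀)) := by rw [hcmx]
          _ = u₀⁻¹ * t ^ n * u₀ := by group
        rw [Finset.mem_coe, Set.mem_toFinset]; beta_reduce
        have hp2 : p.2 = ψ u := by rw [← hup]
        constructor
        · rw [hp2]
          exact T.mul_mem (T.inv_mem hu₀W'.2.2.1) huW'.2.2.1
        · rw [hp2]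
          have hcmu : Commute ((ψ u₀)⁻¹) (ψ u) :=
            (Commute.inv_left (hcomm _ hu₀W'.2.2.1 _ huW'.2.2.1))
          rw [hcmu.mul_pow, inv_pow, hpow, inv_mul_cancel]
      · intro a ha b hb he
        have he2 : a.2 = b.2 := mul_left_cancel he
        have ha1 : a.1 = q := (Finset.mem_filter.mp ha).2
        have hb1 : b.1 = q := (Finset.mem_filter.mp hb).2
        exact Prod.ext (ha1.trans hb1.symm) he2
    have cnt2 : (W.image θ).card ≤ c * ((W.image θ).image Prod.fst).card :=
      Finset.card_le_mul_card_image (W.image θ) c fib2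
    -- the cosets hit come from the normalizer
    haveI : Fintype (↥(Subgroup.normalizer (T : Set ↥G)) ⧸ T.subgroupOf (Subgroup.normalizer (T : Set ↥G))) := Fintype.ofFinite _
    have cnt3 : ((W.image θ).image Prod.fst).card ≤ T.relIndex (Subgroup.normalizer (T : Set ↥G)) := by
      set θq : (↥(Subgroup.normalizer (T : Set ↥G)) ⧸ T.subgroupOf (Subgroup.normalizer (T : Set ↥G))) → (↥G ⧸ T) :=
        Quotient.map' (fun u => (u : ↥G)) (by
          intro a b hab
          rw [QuotientGroup.leftRel_apply] at hab ⊢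
          rw [Subgroup.mem_subgroupOf] at hab
          push_cast at hab
          exact hab) with hθq
      have hsub : ((W.image θ).image Prod.fst) ⊆
          Finset.univ.image (fun q' : ↥(Subgroup.normalizer (T : Set ↥G)) ⧸ T.subgroupOf (Subgroup.normalizer (T : Set ↥G)) => θq q') := by
        intro q hq
        rw [Finset.mem_image] at hq
        obtain ⟨p, hp, rfl⟩ := hq
        rw [Finset.mem_image] at hp
        obtain ⟨u, huW, rfl⟩ := hp
        have huN : u ∈ (Subgroup.normalizer (T : Set ↥G)) := (Finset.mem_filter.mp huW).2.1
        rw [Finset.mem_image]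
        exact ⟨QuotientGroup.mk (⟨u, huN⟩ : ↥(Subgroup.normalizer (T : Set ↥G))), Finset.mem_univ _, rfl⟩
      calc ((W.image θ).image Prod.fst).card
          ≤ (Finset.univ.image (fun q' : ↥(Subgroup.normalizer (T : Set ↥G)) ⧸ T.subgroupOf (Subgroup.normalizer (T : Set ↥G)) => θq q')).card :=
            Finset.card_le_card hsub
      _ ≤ (Finset.univ : Finset (↥(Subgroup.normalizer (T : Set ↥G)) ⧸ T.subgroupOf (Subgroup.normalizer (T : Set ↥G)))).card :=
            Finset.card_image_le
      _ = Fintype.card (↥(Subgroup.normalizer (T : Set ↥G)) ⧸ T.subgroupOf (Subgroup.normalizer (T : Set ↥G))) := Finset.card_univ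
      _ = Nat.card (↥(Subgroup.normalizer (T : Set ↥G)) ⧸ T.subgroupOf (Subgroup.normalizer (T : Set ↥G))) := Nat.card_eq_fintype_card.symm
      _ = T.relIndex (Subgroup.normalizer (T : Set ↥G)) := (Subgroup.index_eq_card _).symm
    calc F.card ≤ W.card := inj1
    _ ≤ Tμ.toFinset.card * (W.image θ).card := cnt1
    _ ≤ Tμ.toFinset.card * (c * ((W.image θ).image Prod.fst).card) :=
        Nat.mul_le_mul_left _ cnt2
    _ ≤ Tμ.toFinset.card * (c * T.relIndex (Subgroup.normalizer (T : Set ↥G))) :=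
        Nat.mul_le_mul_left _ (Nat.mul_le_mul_left _ cnt3)
  have cardA : domA.card ≤ (Tμ.toFinset.card * (c * T.relIndex (Subgroup.normalizer (T : Set ↥G)))) * A.card :=
    Finset.card_le_mul_card_image domA _ fiberbound
  have domAcard : domA.card = Fintype.card ↥G * Tμn.toFinset.card := by
    rw [hdomA, Finset.card_product, Finset.card_univ]
  -- identify the statement's sets with our finsets
  have ePset : {y : H | ∃ g : H, g ∈ G ∧ y = (g * h) ^ m} = (↑Pfin : Set H) := by
    ext y
    simp only [Set.mem_setOf_eq, Finset.mem_coe]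
    constructor
    · rintro ⟨g, hgG, rfl⟩
      rw [hP]
      refine Finset.mem_image_of_mem _ ?_
      rw [hC]
      exact Finset.mem_image_of_mem _ (Finset.mem_univ (⟨g, hgG⟩ : ↥G))
    · intro hy
      rw [hP, Finset.mem_image] at hy
      obtain ⟨x, hxC, rfl⟩ := hy
      rw [hC, Finset.mem_image] at hxC
      obtain ⟨g, _, rfl⟩ := hxC
      exact ⟨(g : H), g.2, rfl⟩
  have ePcard : (Nat.card {y : H | ∃ g : H, g ∈ G ∧ y = (g * h) ^ m}) = Pfin.card := by
    rw [ePset, Nat.card_coe_set_eq, Set.ncard_coe_finset]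
  have eG : (Nat.card G) = Fintype.card ↥G := Nat.card_eq_fintype_card
  -- positivity
  have hTμpos : 0 < Tμ.toFinset.card := by
    rw [Finset.card_pos]
    exact ⟨1, by simp [Set.mem_toFinset, hTμdef, T.one_mem, map_one μ]⟩
  have hcpos : 0 < c := by
    rw [hc, eTn1, Finset.card_pos]
    exact ⟨1, by simp [Set.mem_toFinset, hTn1def, T.one_mem]⟩
  have hrpos : 0 < T.relIndex (Subgroup.normalizer (T : Set ↥G)) := by
    have : (T.subgroupOf (Subgroup.normalizer (T : Set ↥G))).index ≠ 0 := Subgroup.index_ne_zero_of_finite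
    exact Nat.pos_of_ne_zero this
  have hGpos : 0 < Fintype.card ↥G := Fintype.card_pos
  -- final arithmetic over ℝ
  rw [ePcard, eG]
  rw [eTμ, eTμn] at h2
  have cABcard : A.card ≤ B.card := Finset.card_le_card cAB
  have RA1 : (Fintype.card ↥G : ℝ) * Tμn.toFinset.card
      ≤ (Tμ.toFinset.card : ℝ) * ((c : ℝ) * (T.relIndex (Subgroup.normalizer (T : Set ↥G)) : ℝ)) * A.card := by
    exact_mod_cast (domAcard ▸ cardA)
  have RA2 : 3 * (Tμ.toFinset.card : ℝ) ≤ 4 * (Tμn.toFinset.card : ℝ) := by linarith [h2]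
  have RA3 : (A.card : ℝ) ≤ B.card := by exact_mod_cast cABcard
  have RA4 : 2 * (fB.card : ℝ) ≤ B.card := by exact_mod_cast cardB2
  have RA5 : (Pfin.card : ℝ) + B.card ≤ fB.card + (Fintype.card ↥G : ℝ) := by
    have h9 := cardP
    rw [cCcard] at h9
    exact_mod_cast h9
  have Rpos : (0 : ℝ) < Tμ.toFinset.card := by exact_mod_cast hTμpos
  have Rc : (1 : ℝ) ≤ (c : ℝ) := by exact_mod_cast hcpos
  have Rr : (1 : ℝ) ≤ (T.relIndex (Subgroup.normalizer (T : Set ↥G)) : ℝ) := by exact_mod_cast hrpos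
  have RNG : (0 : ℝ) < (Fintype.card ↥G : ℝ) := by exact_mod_cast hGpos
  set NG : ℝ := (Fintype.card ↥G : ℝ)
  set rr : ℝ := (T.relIndex (Subgroup.normalizer (T : Set ↥G)) : ℝ)
  set cc : ℝ := (c : ℝ)
  set aA : ℝ := (A.card : ℝ)
  set pP : ℝ := (Pfin.card : ℝ)
  have e1 : 3 * NG ≤ 4 * (cc * rr) * aA := by
    have k1 : NG * (3 * (Tμ.toFinset.card : ℝ)) ≤ NG * (4 * (Tμn.toFinset.card : ℝ)) :=
      mul_le_mul_of_nonneg_left RA2 (le_of_lt RNG)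
    have k2 : (3 * NG) * (Tμ.toFinset.card : ℝ)
        ≤ (4 * (cc * rr) * aA) * (Tμ.toFinset.card : ℝ) := by nlinarith [RA1, k1, Rpos]
    exact le_of_mul_le_mul_right k2 Rpos
  have e2 : aA ≤ 2 * NG - 2 * pP := by linarith
  have e3 : NG ≤ (NG - pP) * (4 * cc * rr) := by
    have k3 : 4 * (cc * rr) * aA ≤ 4 * (cc * rr) * (2 * NG - 2 * pP) :=
      mul_le_mul_of_nonneg_left e2 (by positivity)
    have haA : (0 : ℝ) ≤ aA := Nat.cast_nonneg _
    have k4 : (0 : ℝ) ≤ (cc * rr) * (NG - pP) :=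
      mul_nonneg (by positivity) (by linarith)
    linarith [e1, k3, k4]
  have h4 : (0 : ℝ) < 4 * cc * rr := by positivity
  have expand : (1 - 1 / (4 * cc * rr)) * NG = NG - NG / (4 * cc * rr) := by
    field_simp
  rw [expand]
  have : NG / (4 * cc * rr) ≤ NG - pP := (div_le_iff₀ h4).mpr e3
  linarith
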